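/- The identity of rational functions ∑_{σ ∈ S_r} sgn(σ) / (x_{σ(1)} * (x_{σ(1)}+x_{σ(2)}) * ... * (x_{σ(1)}+...+x_{σ(r)})) = ∏_{i>j}(x_i - x_j) / (∏_i x_i * ∏_{i>j}(x_i + x_j)) holds in the field of rational functions in variables x_1, ..., x_r. -/

import Mathlib

open scoped BigOperators

section Aux
open Finset Polynomial

variable {F : Type*} [Field F]

theorem lagrange_sum {r : ℕ} (hr : 0 < r) (x : Fin r → F) (hinj : Function.Injective x)
    (f : F[X]) (hdeg : f.natDegree ≤ r) :
    ∑ p : Fin r, f.eval (x p) * (∏ i ∈ Finset.univ.erase p, (x p - x i))⁻¹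
      = f.coeff (r - 1) + f.coeff r * ∑ i, x i := by
  classical
  set N : F[X] := ∏ i : Fin r, (X - C (x i)) with hN
  have hNmonic : N.Monic := monic_prod_of_monic _ _ fun i _ => monic_X_sub_C _
  have hNdeg : N.natDegree = r := by
    rw [hN, natDegree_prod_of_monic _ _ fun i _ => monic_X_sub_C _]
    simp
  set c : F := f.coeff r with hc
  set g : F[X] := f - C c * N with hg
  have hginj : Set.InjOn x (Finset.univ : Finset (Fin r)) := fun a _ b _ h => hinj h
  have hgdeg : g.degree < ((Finset.univ : Finset (Fin r)).card : WithBot ℕ) := by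
    rw [Finset.card_univ, Fintype.card_fin]
    rw [degree_lt_iff_coeff_zero]
    intro m hm
    rcases lt_or_eq_of_le hm with h | h
    · rw [hg, coeff_sub, coeff_C_mul, coeff_eq_zero_of_natDegree_lt (lt_of_le_of_lt hdeg h),
        coeff_eq_zero_of_natDegree_lt (by rw [hNdeg]; exact h), mul_zero, sub_zero]
    · rw [hg, coeff_sub, coeff_C_mul, ← h, ← hNdeg, hNmonic.coeff_natDegree, mul_one, hNdeg,
        ← hc, sub_self]
  -- g equals its interpolation
  have hinterp := Lagrange.eq_interpolate (s := Finset.univ) (v := x)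
    (f := g) hginj hgdeg
  -- compare coefficient (r-1)
  have hbasis : ∀ p : Fin r, (Lagrange.basis Finset.univ x p).coeff (r - 1)
      = (∏ i ∈ Finset.univ.erase p, (x p - x i))⁻¹ := by
    intro p
    have hb : Lagrange.basis Finset.univ x p
        = C (∏ i ∈ Finset.univ.erase p, (x p - x i)⁻¹)
          * ∏ i ∈ Finset.univ.erase p, (X - C (x i)) := by
      rw [Lagrange.basis, map_prod, ← Finset.prod_mul_distrib]
      exact Finset.prod_congr rfl fun i _ => rfl
    have hM : (∏ i ∈ Finset.univ.erase p, (X - C (x i))).Monic :=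
      monic_prod_of_monic _ _ fun i _ => monic_X_sub_C _
    have hMdeg : (∏ i ∈ Finset.univ.erase p, (X - C (x i))).natDegree = r - 1 := by
      rw [natDegree_prod_of_monic _ _ fun i _ => monic_X_sub_C _]
      simp [Finset.card_erase_of_mem]
    rw [hb, coeff_C_mul, ← hMdeg, hM.coeff_natDegree, mul_one, ← Finset.prod_inv_distrib]
  have key := congrArg (fun q : F[X] => q.coeff (r - 1)) hinterp
  simp only [Lagrange.interpolate_apply, finset_sum_coeff, coeff_C_mul] at key
  have hgeval : ∀ p : Fin r, g.eval (x p) = f.eval (x p) := by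
    intro p
    rw [hg, eval_sub, eval_mul, eval_C, hN, eval_prod]
    rw [Finset.prod_eq_zero (Finset.mem_univ p) (by simp), mul_zero, sub_zero]
  have hNnext : N.coeff (r - 1) = -∑ i, x i := by
    have h1 : N.nextCoeff = -∑ i, x i := prod_X_sub_C_nextCoeff x
    rwa [nextCoeff_of_natDegree_pos (by rw [hNdeg]; exact hr), hNdeg] at h1
  have hgc : g.coeff (r - 1) = f.coeff (r - 1) + c * ∑ i, x i := by
    rw [hg, coeff_sub, coeff_C_mul, hNnext]
    ring
  rw [hgc] at key
  rw [key]
  exact Finset.sum_congr rfl fun p _ => by rw [hbasis p, hgeval p]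

theorem sym_id {r : ℕ} (x : Fin r → F) (hinj : Function.Injective x) (h2 : (2 : F) ≠ 0) :
    ∑ p : Fin r, x p * (∏ i ∈ Finset.univ.erase p, (x p + x i))
        * (∏ i ∈ Finset.univ.erase p, (x p - x i))⁻¹ = ∑ i, x i := by
  rcases Nat.eq_zero_or_pos r with h | hr
  · subst h; simp
  classical
  set f : F[X] := ∏ i : Fin r, (X - C (-(x i))) with hf
  have hfm : f.Monic := monic_prod_of_monic _ _ fun i _ => monic_X_sub_C _
  have hfd : f.natDegree = r := by
    rw [hf, natDegree_prod_of_monic _ _ fun i _ => monic_X_sub_C _]; simp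
  have hls := lagrange_sum hr x hinj f (le_of_eq hfd)
  have hcr : f.coeff r = 1 := by rw [← hfd]; exact hfm.coeff_natDegree
  have hcr1 : f.coeff (r - 1) = ∑ i, x i := by
    have h1 : f.nextCoeff = -∑ i : Fin r, -x i := prod_X_sub_C_nextCoeff _
    rw [nextCoeff_of_natDegree_pos (by rw [hfd]; exact hr), hfd] at h1
    rw [h1]; simp
  have heval : ∀ p, f.eval (x p)
      = 2 * (x p * ∏ i ∈ Finset.univ.erase p, (x p + x i)) := by
    intro p
    rw [hf, eval_prod]
    have h3 : ∀ i : Fin r, eval (x p) (X - C (-(x i))) = x p + x i := by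
      intro i; rw [eval_sub, eval_X, eval_C, sub_neg_eq_add]
    rw [Finset.prod_congr rfl fun i _ => h3 i,
      ← Finset.mul_prod_erase Finset.univ _ (Finset.mem_univ p)]
    ring
  rw [hcr, hcr1, one_mul] at hls
  apply mul_left_cancel₀ h2
  rw [show (2 : F) * ∑ i, x i = ∑ i : Fin r, x i + ∑ i : Fin r, x i by ring, ← hls,
    Finset.mul_sum]
  refine (Finset.sum_congr rfl fun p _ => ?_).symm
  rw [heval p]; ring

def pairsF (r : ℕ) : Finset (Fin r × Fin r) := Finset.univ.filter fun q => q.2 < q.1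

theorem prod_pairs_succAbove {n : ℕ} (g : Fin (n + 1) → Fin (n + 1) → F) (p : Fin (n + 1)) :
    ∏ q ∈ pairsF (n + 1), g q.1 q.2
      = (∏ q ∈ pairsF n, g (p.succAbove q.1) (p.succAbove q.2))
        * ((∏ i ∈ Finset.univ.filter (p < ·), g i p)
          * (∏ j ∈ Finset.univ.filter (· < p), g p j)) := by
  classical
  rw [← Finset.prod_filter_mul_prod_filter_not (pairsF (n + 1))
    (fun q => q.1 ≠ p ∧ q.2 ≠ p)]
  congr 1
  · refine (Finset.prod_nbij (fun q => (p.succAbove q.1, p.succAbove q.2)) ?_ ?_ ?_ ?_).symm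
    · intro q hq
      simp only [pairsF, Finset.mem_filter, Finset.mem_univ, true_and] at hq ⊢
      exact ⟨Fin.succAbove_lt_succAbove_iff.mpr hq,
        Fin.succAbove_ne p q.1, Fin.succAbove_ne p q.2⟩
    · intro a _ b _ hab
      simp only [Prod.ext_iff] at hab ⊢
      exact ⟨Fin.succAbove_right_injective hab.1, Fin.succAbove_right_injective hab.2⟩
    · rintro ⟨i, j⟩ hij
      simp only [Finset.coe_filter, pairsF, Set.mem_setOf_eq, Finset.mem_filter,
        Finset.mem_univ, true_and] at hij
      obtain ⟨hji, hip, hjp⟩ := hij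
      obtain ⟨a, ha⟩ := Fin.exists_succAbove_eq hip
      obtain ⟨b, hb⟩ := Fin.exists_succAbove_eq hjp
      refine ⟨(a, b), ?_, by simp [ha, hb]⟩
      simp only [Finset.mem_coe, pairsF, Finset.mem_filter, Finset.mem_univ, true_and]
      rw [← ha, ← hb] at hji
      exact Fin.succAbove_lt_succAbove_iff.mp hji
    · intro q _; rfl
  · have hBC : (pairsF (n + 1)).filter (fun q => ¬(q.1 ≠ p ∧ q.2 ≠ p))
        = ((Finset.univ.filter (p < ·)).image (fun i => (i, p)))
          ∪ ((Finset.univ.filter (· < p)).image (fun j => (p, j))) := by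
      ext q
      simp only [pairsF, Finset.mem_filter, Finset.mem_univ, true_and, Finset.mem_union,
        Finset.mem_image, not_and_or, not_ne_iff]
      constructor
      · rintro ⟨hlt, h1 | h2⟩
        · exact Or.inr ⟨q.2, h1 ▸ hlt, by rw [← h1]⟩
        · exact Or.inl ⟨q.1, h2 ▸ hlt, by rw [← h2]⟩
      · rintro (⟨i, hi, rfl⟩ | ⟨j, hj, rfl⟩)
        · exact ⟨hi, Or.inr rfl⟩
        · exact ⟨hj, Or.inl rfl⟩
    rw [hBC, Finset.prod_union, Finset.prod_image (by intro a _ b _ h; exact (Prod.ext_iff.mp h).1),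
      Finset.prod_image (by intro a _ b _ h; exact (Prod.ext_iff.mp h).2)]
    · rw [Finset.disjoint_left]
      rintro q hq hq'
      simp only [Finset.mem_image, Finset.mem_filter, Finset.mem_univ, true_and] at hq hq'
      obtain ⟨i, hi, rfl⟩ := hq
      obtain ⟨j, hj, hj'⟩ := hq'
      obtain ⟨h1, h2⟩ := Prod.ext_iff.mp hj'
      simp only [] at h1
      exact lt_irrefl p (h1 ▸ hi : p < p)

def VV {r : ℕ} (x : Fin r → F) : F := ∏ q ∈ pairsF r, (x q.1 - x q.2)
def QQ {r : ℕ} (x : Fin r → F) : F := ∏ q ∈ pairsF r, (x q.1 + x q.2)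
def PP {r : ℕ} (x : Fin r → F) : F := ∏ i, x i
noncomputable def DD {r : ℕ} (x : Fin r → F) (σ : Equiv.Perm (Fin r)) : F :=
  ∏ k, ∑ j ∈ Finset.univ.filter (· ≤ k), x (σ j)
noncomputable def LL {r : ℕ} (x : Fin r → F) : F :=
  ∑ σ : Equiv.Perm (Fin r), ((Equiv.Perm.sign σ : ℤ) : F) / DD x σ

theorem erase_eq_union {n : ℕ} (p : Fin (n + 1)) :
    (Finset.univ : Finset (Fin (n + 1))).erase p
      = Finset.univ.filter (p < ·) ∪ Finset.univ.filter (· < p) := by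
  ext i
  simp only [Finset.mem_erase, Finset.mem_univ, and_true, Finset.mem_union, Finset.mem_filter,
    true_and, ne_iff_lt_or_gt]
  tauto

theorem disj_filters {n : ℕ} (p : Fin (n + 1)) :
    Disjoint ((Finset.univ : Finset (Fin (n + 1))).filter (p < ·))
      (Finset.univ.filter (· < p)) := by
  rw [Finset.disjoint_left]
  intro i hi hi'
  simp only [Finset.mem_filter, Finset.mem_univ, true_and] at hi hi'
  exact lt_irrefl p (hi.trans hi')

theorem card_filter_gt {n : ℕ} (p : Fin (n + 1)) :
    ((Finset.univ : Finset (Fin (n + 1))).filter (p < ·)).card = n - (p : ℕ) := by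
  have : (Finset.univ : Finset (Fin (n + 1))).filter (p < ·) = Finset.Ioi p := by
    ext i; simp
  rw [this, Fin.card_Ioi]
  simp

theorem PP_split {n : ℕ} (x : Fin (n + 1) → F) (p : Fin (n + 1)) :
    PP x = x p * PP (x ∘ p.succAbove) :=
  Fin.prod_univ_succAbove x p

theorem QQ_split {n : ℕ} (x : Fin (n + 1) → F) (p : Fin (n + 1)) :
    QQ x = QQ (x ∘ p.succAbove) * ∏ i ∈ Finset.univ.erase p, (x p + x i) := by
  rw [QQ, prod_pairs_succAbove (fun i j => x i + x j) p]
  congr 1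
  rw [erase_eq_union p, Finset.prod_union (disj_filters p)]
  congr 1
  exact Finset.prod_congr rfl fun i _ => add_comm _ _

theorem VV_split {n : ℕ} (x : Fin (n + 1) → F) (p : Fin (n + 1)) :
    VV x = VV (x ∘ p.succAbove)
      * ((-1 : F) ^ (n - (p : ℕ)) * ∏ i ∈ Finset.univ.erase p, (x p - x i)) := by
  rw [VV, prod_pairs_succAbove (fun i j => x i - x j) p]
  congr 1
  rw [erase_eq_union p, Finset.prod_union (disj_filters p)]
  have h1 : ∏ i ∈ Finset.univ.filter (p < ·), (x i - x p)
      = (-1 : F) ^ (n - (p : ℕ)) * ∏ i ∈ Finset.univ.filter (p < ·), (x p - x i) := by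
    rw [Finset.prod_congr rfl (fun i _ => show x i - x p = -1 * (x p - x i) by ring),
      Finset.prod_mul_distrib, Finset.prod_const, card_filter_gt]
  rw [h1]
  ring

theorem LL_perm {r : ℕ} (w : Fin r → F) (π : Equiv.Perm (Fin r)) :
    LL (w ∘ ⇑π) = ((Equiv.Perm.sign π : ℤ) : F) * LL w := by
  have hsq : ((Equiv.Perm.sign π : ℤ) : F) * ((Equiv.Perm.sign π : ℤ) : F) = 1 := by
    rw [← Int.cast_mul, ← Units.val_mul, Int.units_mul_self, Units.val_one, Int.cast_one]
  rw [LL, LL, Finset.mul_sum]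
  refine Fintype.sum_equiv (Equiv.mulLeft π) _ _ fun τ => ?_
  have hD : DD (w ∘ ⇑π) τ = DD w (π * τ) := rfl
  rw [hD, show Equiv.mulLeft π τ = π * τ from rfl, Equiv.Perm.sign_mul]
  push_cast
  rw [div_eq_mul_inv, div_eq_mul_inv]
  calc ((Equiv.Perm.sign τ : ℤ) : F) * (DD w (π * τ))⁻¹
      = (((Equiv.Perm.sign π : ℤ) : F) * ((Equiv.Perm.sign π : ℤ) : F))
        * ((Equiv.Perm.sign τ : ℤ) : F) * (DD w (π * τ))⁻¹ := by rw [hsq, one_mul]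
    _ = ((Equiv.Perm.sign π : ℤ) : F)
        * (((Equiv.Perm.sign π : ℤ) : F) * ((Equiv.Perm.sign τ : ℤ) : F) * (DD w (π * τ))⁻¹) := by
        ring

def embF {n : ℕ} (p : Fin (n + 1)) (a : Fin n) : Fin (n + 1) := Equiv.swap 0 p a.succ

theorem LL_emb {n : ℕ} (x : Fin (n + 1) → F) (p : Fin (n + 1)) :
    (if p = 0 then (1 : F) else -1) * LL (x ∘ embF p)
      = (-1 : F) ^ (p : ℕ) * LL (x ∘ p.succAbove) := by
  induction p using Fin.cases with
  | zero =>
    rw [if_pos rfl, one_mul, Fin.val_zero, pow_zero, one_mul]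
    have h0 : x ∘ embF (0 : Fin (n + 1)) = x ∘ Fin.succAbove 0 := by
      funext a
      simp [embF, Equiv.swap_self]
    rw [h0]
  | succ i =>
    have hfe : x ∘ embF i.succ = (x ∘ (i.succ).succAbove) ∘ ⇑(Fin.cycleRange i) := by
      funext a
      simp only [Function.comp_apply, embF]
      rw [← Fin.succAbove_cycleRange i a]
    rw [hfe, LL_perm, Fin.sign_cycleRange, if_neg (Fin.succ_ne_zero i), Fin.val_succ]
    have hcast : (((((-1 : ℤˣ) ^ (i : ℕ)) : ℤˣ) : ℤ) : F) = (-1 : F) ^ (i : ℕ) := by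
      push_cast
      ring
    rw [hcast, pow_succ]
    ring

theorem filter_le_last {n : ℕ} :
    (Finset.univ : Finset (Fin (n + 1))).filter (· ≤ Fin.last n) = Finset.univ := by
  ext j; simp [Fin.le_last]

theorem filter_le_castSucc {n : ℕ} (a : Fin n) :
    (Finset.univ : Finset (Fin (n + 1))).filter (· ≤ a.castSucc)
      = (Finset.univ.filter (· ≤ a)).image Fin.castSucc := by
  ext j
  simp only [Finset.mem_filter, Finset.mem_univ, true_and, Finset.mem_image]
  constructor
  · intro hj
    have hj' : (j : ℕ) < n := lt_of_le_of_lt (by exact_mod_cast hj) a.isLt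
    refine ⟨⟨(j : ℕ), hj'⟩, ?_, ?_⟩
    · rw [Fin.le_def]
      exact_mod_cast hj
    · ext; simp
  · rintro ⟨b, hb, rfl⟩
    exact Fin.castSucc_le_castSucc_iff.mpr hb

theorem DD_decomp {n : ℕ} (x : Fin (n + 1) → F) (p : Fin (n + 1)) (τ : Equiv.Perm (Fin n)) :
    DD x (Equiv.Perm.decomposeFin.symm (p, τ) * finRotate (n + 1))
      = DD (x ∘ embF p) τ * ∑ i, x i := by
  set σ := Equiv.Perm.decomposeFin.symm (p, τ) * finRotate (n + 1) with hσ
  rw [DD, Fin.prod_univ_castSucc]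
  congr 1
  · rw [DD]
    refine Finset.prod_congr rfl fun a _ => ?_
    rw [filter_le_castSucc a, Finset.sum_image (fun b _ c _ h => Fin.castSucc_injective n h)]
    refine Finset.sum_congr rfl fun b _ => ?_
    congr 1
    show σ b.castSucc = embF p (τ b)
    rw [hσ, Equiv.Perm.mul_apply, finRotate_succ_apply, Fin.coeSucc_eq_succ,
      Equiv.Perm.decomposeFin_symm_apply_succ]
    rfl
  · rw [filter_le_last]
    exact Equiv.sum_comp σ x

theorem alg_helper (vz pz qz e a s xp u v : F) (hpz : pz ≠ 0) (hqz : qz ≠ 0) (he : e ≠ 0)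
    (ha : a ≠ 0) (hs : s ≠ 0) (hxp : xp ≠ 0) :
    (u / s) * (v * (vz / (pz * qz)))
      = ((vz * (u * v * e)) / ((xp * pz) * (qz * a))) * (xp * a * e⁻¹) / s := by
  field_simp

theorem LL_eq (h2 : (2 : F) ≠ 0) : ∀ (r : ℕ) (x : Fin r → F),
    (∀ s : Finset (Fin r), s.Nonempty → ∑ i ∈ s, x i ≠ 0) → Function.Injective x →
    LL x = VV x / (PP x * QQ x) := by
  intro r
  induction r with
  | zero =>
    intro x hx hinj
    rw [LL, VV, PP, QQ]
    simp [DD, pairsF, Finset.univ_eq_empty]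
  | succ n ih =>
    intro x hx hinj
    have hS : (∑ i, x i) ≠ 0 := hx Finset.univ Finset.univ_nonempty
    have hxp : ∀ p : Fin (n + 1), x p ≠ 0 := by
      intro p
      have := hx {p} ⟨p, Finset.mem_singleton_self p⟩
      rwa [Finset.sum_singleton] at this
    have hpair : ∀ a b : Fin (n + 1), a ≠ b → x a + x b ≠ 0 := by
      intro a b hab
      have := hx {a, b} ⟨a, Finset.mem_insert_self _ _⟩
      rwa [Finset.sum_pair hab] at this
    have hdiff : ∀ a b : Fin (n + 1), a ≠ b → x a - x b ≠ 0 :=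
      fun a b hab => sub_ne_zero.mpr fun h => hab (hinj h)
    have hE : ∀ p : Fin (n + 1), (∏ i ∈ Finset.univ.erase p, (x p - x i)) ≠ 0 :=
      fun p => Finset.prod_ne_zero_iff.mpr fun i hi =>
        hdiff p i fun h => (Finset.mem_erase.mp hi).1 h.symm
    have hA : ∀ p : Fin (n + 1), (∏ i ∈ Finset.univ.erase p, (x p + x i)) ≠ 0 :=
      fun p => Finset.prod_ne_zero_iff.mpr fun i hi =>
        hpair p i fun h => (Finset.mem_erase.mp hi).1 h.symm
    have hzinj : ∀ p : Fin (n + 1), Function.Injective (x ∘ p.succAbove) :=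
      fun p => hinj.comp Fin.succAbove_right_injective
    have hzx : ∀ (p : Fin (n + 1)) (s : Finset (Fin n)), s.Nonempty →
        ∑ a ∈ s, (x ∘ p.succAbove) a ≠ 0 := by
      intro p s hs
      have himg : ∑ a ∈ s, (x ∘ p.succAbove) a = ∑ i ∈ s.image p.succAbove, x i :=
        (Finset.sum_image fun a _ b _ h => Fin.succAbove_right_injective h).symm
      rw [himg]
      exact hx _ (hs.image _)
    have hPPz : ∀ p : Fin (n + 1), PP (x ∘ p.succAbove) ≠ 0 :=
      fun p => Finset.prod_ne_zero_iff.mpr fun a _ => hxp _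
    have hQQz : ∀ p : Fin (n + 1), QQ (x ∘ p.succAbove) ≠ 0 := by
      intro p
      refine Finset.prod_ne_zero_iff.mpr fun q hq => ?_
      simp only [pairsF, Finset.mem_filter, Finset.mem_univ, true_and] at hq
      exact hpair _ _ fun h => (ne_of_gt hq) (Fin.succAbove_right_injective h)
    -- Step 1: reindex the sum over permutations
    have hsum1 : LL x = ∑ pt : Fin (n + 1) × Equiv.Perm (Fin n),
        ((Equiv.Perm.sign (Equiv.Perm.decomposeFin.symm pt * finRotate (n + 1)) : ℤ) : F)
          / DD x (Equiv.Perm.decomposeFin.symm pt * finRotate (n + 1)) := by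
      rw [LL]
      exact (Fintype.sum_equiv
        (Equiv.Perm.decomposeFin.symm.trans (Equiv.mulRight (finRotate (n + 1)))) _ _
        fun pt => rfl).symm
    -- Step 2: per-term simplification
    have hterm : ∀ (p : Fin (n + 1)) (τ : Equiv.Perm (Fin n)),
        ((Equiv.Perm.sign (Equiv.Perm.decomposeFin.symm (p, τ) * finRotate (n + 1)) : ℤ) : F)
          / DD x (Equiv.Perm.decomposeFin.symm (p, τ) * finRotate (n + 1))
        = ((-1 : F) ^ n / (∑ i, x i)) * ((if p = 0 then (1 : F) else -1)
            * (((Equiv.Perm.sign τ : ℤ) : F) / DD (x ∘ embF p) τ)) := by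
      intro p τ
      rw [DD_decomp, Equiv.Perm.sign_mul, Equiv.Perm.decomposeFin.symm_sign, sign_finRotate,
        Nat.succ_sub_one]
      have hcast : ((((if p = 0 then (1 : ℤˣ) else -1) * Equiv.Perm.sign τ
            * (-1 : ℤˣ) ^ n : ℤˣ) : ℤ) : F)
          = (if p = 0 then (1 : F) else -1) * ((Equiv.Perm.sign τ : ℤ) : F) * (-1 : F) ^ n := by
        split_ifs <;> push_cast <;> ring
      rw [hcast, div_eq_mul_inv, div_eq_mul_inv, div_eq_mul_inv, mul_inv]
      ring
    rw [hsum1, Fintype.sum_prod_type]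
    have hinner : ∀ p : Fin (n + 1),
        (∑ τ : Equiv.Perm (Fin n),
          ((Equiv.Perm.sign (Equiv.Perm.decomposeFin.symm (p, τ) * finRotate (n + 1)) : ℤ) : F)
            / DD x (Equiv.Perm.decomposeFin.symm (p, τ) * finRotate (n + 1)))
        = (VV x / (PP x * QQ x))
          * (x p * (∏ i ∈ Finset.univ.erase p, (x p + x i))
            * (∏ i ∈ Finset.univ.erase p, (x p - x i))⁻¹) / (∑ i, x i) := by
      intro p
      have h1 : (∑ τ : Equiv.Perm (Fin n),
          ((Equiv.Perm.sign (Equiv.Perm.decomposeFin.symm (p, τ) * finRotate (n + 1)) : ℤ) : F)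
            / DD x (Equiv.Perm.decomposeFin.symm (p, τ) * finRotate (n + 1)))
          = ((-1 : F) ^ n / (∑ i, x i)) * ((if p = 0 then (1 : F) else -1) * LL (x ∘ embF p)) := by
        rw [Finset.sum_congr rfl fun τ _ => hterm p τ, ← Finset.mul_sum, ← Finset.mul_sum]
        rfl
      rw [h1, LL_emb, ih (x ∘ p.succAbove) (hzx p) (hzinj p)]
      -- now pure field algebra
      have hv : (-1 : F) ^ (p : ℕ) * (-1 : F) ^ (p : ℕ) = 1 := by
        rw [← pow_add, ← two_mul, pow_mul]
        norm_num
      have hpow : (-1 : F) ^ (n - (p : ℕ)) * (-1 : F) ^ (p : ℕ) = (-1 : F) ^ n := by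
        rw [← pow_add, Nat.sub_add_cancel (Fin.is_le p)]
      have hw : (-1 : F) ^ (n - (p : ℕ)) = (-1 : F) ^ n * (-1 : F) ^ (p : ℕ) := by
        calc (-1 : F) ^ (n - (p : ℕ))
            = (-1 : F) ^ (n - (p : ℕ)) * ((-1 : F) ^ (p : ℕ) * (-1 : F) ^ (p : ℕ)) := by
              rw [hv, mul_one]
          _ = ((-1 : F) ^ (n - (p : ℕ)) * (-1 : F) ^ (p : ℕ)) * (-1 : F) ^ (p : ℕ) := by ring
          _ = (-1 : F) ^ n * (-1 : F) ^ (p : ℕ) := by rw [hpow]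
      rw [VV_split x p, PP_split x p, QQ_split x p, hw]
      exact alg_helper _ _ _ _ _ _ _ _ _ (hPPz p) (hQQz p) (hE p) (hA p) hS (hxp p)
    rw [Finset.sum_congr rfl fun p _ => hinner p, ← Finset.sum_div, ← Finset.mul_sum,
      sym_id x hinj h2, mul_div_assoc, div_self hS, mul_one]
end Aux

/-- The variable `x_i` viewed inside the field of rational functions `ℚ(x_1,…,x_r)`. -/
noncomputable def Xv (r : ℕ) (i : Fin r) : FractionRing (MvPolynomial (Fin r) ℚ) :=
  algebraMap (MvPolynomial (Fin r) ℚ) (FractionRing (MvPolynomial (Fin r) ℚ)) (MvPolynomial.X i)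

/-- `∑_{σ∈S_r} sgn σ / (x_{σ(1)}(x_{σ(1)}+x_{σ(2)})⋯(x_{σ(1)}+⋯+x_{σ(r)}))
    = ∏_{i>j}(x_i-x_j) / (∏_i x_i ∏_{i>j}(x_i+x_j))`
in the field of rational functions `ℚ(x_1,…,x_r)`. -/
theorem stmt3 (r : ℕ) :
    ∑ σ : Equiv.Perm (Fin r),
        ((Equiv.Perm.sign σ : ℤ) : FractionRing (MvPolynomial (Fin r) ℚ)) /
          ∏ k : Fin r, ∑ j ∈ Finset.univ.filter (· ≤ k), Xv r (σ j)
      = (∏ p ∈ Finset.univ.filter (fun p : Fin r × Fin r => p.2 < p.1),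
            (Xv r p.1 - Xv r p.2)) /
        ((∏ i : Fin r, Xv r i) *
          ∏ p ∈ Finset.univ.filter (fun p : Fin r × Fin r => p.2 < p.1),
            (Xv r p.1 + Xv r p.2)) := by
  classical
  have halg : Function.Injective
      (algebraMap (MvPolynomial (Fin r) ℚ) (FractionRing (MvPolynomial (Fin r) ℚ))) :=
    IsFractionRing.injective _ _
  have h2 : (2 : FractionRing (MvPolynomial (Fin r) ℚ)) ≠ 0 := by
    intro h
    have : ((2 : MvPolynomial (Fin r) ℚ)) = 0 := by
      apply halg
      rw [map_ofNat, map_zero]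
      exact_mod_cast h
    exact two_ne_zero this
  have hx : ∀ s : Finset (Fin r), s.Nonempty → ∑ i ∈ s, Xv r i ≠ 0 := by
    intro s hs h
    obtain ⟨i, hi⟩ := hs
    have hsum : (∑ j ∈ s, MvPolynomial.X j : MvPolynomial (Fin r) ℚ) = 0 := by
      apply halg
      rw [map_sum, map_zero]
      exact h
    have hc := congrArg (MvPolynomial.coeff (Finsupp.single i 1)) hsum
    rw [MvPolynomial.coeff_sum, MvPolynomial.coeff_zero] at hc
    rw [Finset.sum_congr rfl (fun j _ => MvPolynomial.coeff_X' (R := ℚ) j (Finsupp.single i 1))]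
      at hc
    have hc2 : (∑ j ∈ s, if (Finsupp.single j 1 : Fin r →₀ ℕ) = Finsupp.single i 1
          then (1 : ℚ) else 0)
        = ∑ j ∈ s, if j = i then (1 : ℚ) else 0 := by
      refine Finset.sum_congr rfl fun j _ => ?_
      by_cases hji : j = i
      · simp [hji]
      · rw [if_neg fun hh => hji (Finsupp.single_left_injective one_ne_zero hh), if_neg hji]
    rw [hc2, Finset.sum_ite_eq' s i (fun _ => (1 : ℚ)), if_pos hi] at hc
    exact one_ne_zero hc
  have hinj : Function.Injective (Xv r) :=
    fun a b h => MvPolynomial.X_injective (halg h)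
  exact LL_eq h2 r (Xv r) hx hinj
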